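/- For 1 < p < ∞, the Bellman function B(F, f, A, v) = (p/(p-1))^p · F − (p^p/(p-1)) · f^p/(A + (p-1)v)^(p-1) is concave on the convex domain D = {(F,f,A,v) : F ≥ 0, f ≥ 0, A > 0, v > 0, v ≥ A, f^p ≤ F v^(p-1)}. -/

import Mathlib

open Real Set

lemma bellman_pos_comb {a b s1 s2 : ℝ} (ha : 0 ≤ a) (hb : 0 ≤ b) (hab : a + b = 1)
    (hs1 : 0 < s1) (hs2 : 0 < s2) : 0 < a * s1 + b * s2 := by
  rcases ha.lt_or_eq with h | h
  · nlinarith [mul_pos h hs1, mul_nonneg hb hs2.le]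
  · have hb1 : b = 1 := by linarith
    rw [← h, hb1]
    simpa using hs2

lemma bellman_key (p : ℝ) (hp : 1 < p) {f1 f2 s1 s2 a b : ℝ}
    (hf1 : 0 ≤ f1) (hf2 : 0 ≤ f2) (hs1 : 0 < s1) (hs2 : 0 < s2)
    (ha : 0 ≤ a) (hb : 0 ≤ b) (hab : a + b = 1) :
    (a * f1 + b * f2) ^ p / (a * s1 + b * s2) ^ (p - 1) ≤
      a * (f1 ^ p / s1 ^ (p - 1)) + b * (f2 ^ p / s2 ^ (p - 1)) := by
  set S := a * s1 + b * s2 with hSdef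
  have hS : 0 < S := bellman_pos_comb ha hb hab hs1 hs2
  have hw1 : (0:ℝ) ≤ a * s1 / S := by positivity
  have hw2 : (0:ℝ) ≤ b * s2 / S := by positivity
  have hwsum : a * s1 / S + b * s2 / S = 1 := by field_simp; exact hSdef.symm
  have h := (convexOn_rpow hp.le).2 (mem_Ici.2 (by positivity : (0:ℝ) ≤ f1 / s1))
    (mem_Ici.2 (by positivity : (0:ℝ) ≤ f2 / s2)) hw1 hw2 hwsum
  simp only [smul_eq_mul] at h
  have harg : a * s1 / S * (f1 / s1) + b * s2 / S * (f2 / s2) = (a * f1 + b * f2) / S := by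
    field_simp
  rw [harg, Real.div_rpow (by positivity) hS.le] at h
  have hfs1 : (f1 / s1) ^ p = f1 ^ p / s1 ^ p := Real.div_rpow hf1 hs1.le p
  have hfs2 : (f2 / s2) ^ p = f2 ^ p / s2 ^ p := Real.div_rpow hf2 hs2.le p
  have hs1p : s1 ^ p = s1 ^ (p - 1) * s1 := by
    rw [← Real.rpow_add_one hs1.ne' (p - 1)]; ring_nf
  have hs2p : s2 ^ p = s2 ^ (p - 1) * s2 := by
    rw [← Real.rpow_add_one hs2.ne' (p - 1)]; ring_nf
  have hSp : S ^ p = S ^ (p - 1) * S := by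
    rw [← Real.rpow_add_one hS.ne' (p - 1)]; ring_nf
  rw [hfs1, hfs2, hs1p, hs2p, hSp] at h
  have h' := mul_le_mul_of_nonneg_right h hS.le
  have hs1' : (0:ℝ) < s1 ^ (p - 1) := Real.rpow_pos_of_pos hs1 _
  have hs2' : (0:ℝ) < s2 ^ (p - 1) := Real.rpow_pos_of_pos hs2 _
  have hS' : (0:ℝ) < S ^ (p - 1) := Real.rpow_pos_of_pos hS _
  calc (a * f1 + b * f2) ^ p / S ^ (p - 1)
      = (a * f1 + b * f2) ^ p / (S ^ (p - 1) * S) * S := by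
        field_simp
    _ ≤ (a * s1 / S * (f1 ^ p / (s1 ^ (p - 1) * s1)) +
          b * s2 / S * (f2 ^ p / (s2 ^ (p - 1) * s2))) * S := h'
    _ = a * (f1 ^ p / s1 ^ (p - 1)) + b * (f2 ^ p / s2 ^ (p - 1)) := by
        field_simp

theorem bellman_concave (p : ℝ) (hp : 1 < p) :
    ConcaveOn ℝ
      {x : ℝ × ℝ × ℝ × ℝ |
        0 ≤ x.1 ∧ 0 ≤ x.2.1 ∧ 0 < x.2.2.1 ∧ 0 < x.2.2.2 ∧ x.2.2.1 ≤ x.2.2.2 ∧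
        x.2.1 ^ p ≤ x.1 * x.2.2.2 ^ (p - 1)}
      (fun x : ℝ × ℝ × ℝ × ℝ =>
        (p / (p - 1)) ^ p * x.1 -
          (p ^ p / (p - 1)) * x.2.1 ^ p / (x.2.2.1 + (p - 1) * x.2.2.2) ^ (p - 1)) := by
  have hp1 : (0:ℝ) < p - 1 := by linarith
  constructor
  · -- convexity of the domain
    rintro ⟨F1, f1, A1, v1⟩ ⟨hF1, hf1, hA1, hv1, hAv1, hFv1⟩
      ⟨F2, f2, A2, v2⟩ ⟨hF2, hf2, hA2, hv2, hAv2, hFv2⟩ a b ha hb hab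
    dsimp only at *
    simp only [Set.mem_setOf_eq, Prod.smul_mk, Prod.mk_add_mk, smul_eq_mul]
    have hV : (0:ℝ) < a * v1 + b * v2 := bellman_pos_comb ha hb hab hv1 hv2
    refine ⟨by nlinarith [mul_nonneg ha hF1, mul_nonneg hb hF2],
      by nlinarith [mul_nonneg ha hf1, mul_nonneg hb hf2],
      bellman_pos_comb ha hb hab hA1 hA2, hV,
      by nlinarith [mul_le_mul_of_nonneg_left hAv1 ha, mul_le_mul_of_nonneg_left hAv2 hb], ?_⟩
    have hV' : (0:ℝ) < (a * v1 + b * v2) ^ (p - 1) := Real.rpow_pos_of_pos hV _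
    rw [← div_le_iff₀ hV']
    have key := bellman_key p hp hf1 hf2 hv1 hv2 ha hb hab
    have h1 : f1 ^ p / v1 ^ (p - 1) ≤ F1 :=
      (div_le_iff₀ (Real.rpow_pos_of_pos hv1 _)).2 hFv1
    have h2 : f2 ^ p / v2 ^ (p - 1) ≤ F2 :=
      (div_le_iff₀ (Real.rpow_pos_of_pos hv2 _)).2 hFv2
    nlinarith [mul_le_mul_of_nonneg_left h1 ha, mul_le_mul_of_nonneg_left h2 hb]
  · -- concavity inequality
    rintro ⟨F1, f1, A1, v1⟩ ⟨hF1, hf1, hA1, hv1, hAv1, hFv1⟩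
      ⟨F2, f2, A2, v2⟩ ⟨hF2, hf2, hA2, hv2, hAv2, hFv2⟩ a b ha hb hab
    dsimp only at *
    simp only [Prod.smul_mk, Prod.mk_add_mk, smul_eq_mul]
    have hs1 : (0:ℝ) < A1 + (p - 1) * v1 := by nlinarith
    have hs2 : (0:ℝ) < A2 + (p - 1) * v2 := by nlinarith
    have key := bellman_key p hp hf1 hf2 hs1 hs2 ha hb hab
    have hc2 : (0:ℝ) ≤ p ^ p / (p - 1) := by positivity
    have hcomb : a * A1 + b * A2 + (p - 1) * (a * v1 + b * v2)
        = a * (A1 + (p - 1) * v1) + b * (A2 + (p - 1) * v2) := by ring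
    rw [hcomb]
    have hkey := mul_le_mul_of_nonneg_left key hc2
    ring_nf at hkey ⊢
    linarith [hkey]
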